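/- arXiv:1308.1719 — 2 statements merged into one kernel-verified Lean document; each statement's English description precedes it below -/
import Mathlib

section
/- Let $1 < r \leq 2$ and $p = r'$ its Hölder conjugate. Let $A_0, A_1, A_2 \subset \mathbb{R}^{1+2}$ be measurable sets and $F_0, F_1, F_2 \geq 0$ be measurable functions supported in $-A_0, A_1, A_2$ respectively. Then the trilinear convolution form $J(F_0, F_1, F_2) = \iint F_0(-X_0) F_1(X_1) F_2(X_0 - X_1)\, dX_1\, dX_0$ satisfies $J \lesssim \sup_{X_0 \in A_0} |A_1 \cap (X_0 - A_2)|^{1/r} \cdot \|F_0\|_{L^r} \|F_1\|_{L^p} \|F_2\|_{L^p}$. -/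
open MeasureTheory ENNReal

/-- The trilinear convolution form `J(F₀,F₁,F₂) = ∬ F₀(-X₀)F₁(X₁)F₂(X₀-X₁) dX₁ dX₀`. -/
noncomputable def trilinearForm (F0 F1 F2 : (Fin 3 → ℝ) → ℝ≥0∞) : ℝ≥0∞ :=
  ∫⁻ X0, ∫⁻ X1, F0 (-X0) * F1 X1 * F2 (X0 - X1)

/-- The `L^q` norm (`q` a positive real) of a nonnegative function on `ℝ^(1+2)`. -/
noncomputable def lpNorm3 (q : ℝ) (F : (Fin 3 → ℝ) → ℝ≥0∞) : ℝ≥0∞ :=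
  (∫⁻ X, F X ^ q) ^ (1/q)

theorem stmt2 (r p : ℝ) (hr : 1 < r) (hr2 : r ≤ 2) (hp : 1/r + 1/p = 1) :
    ∃ C : ℝ≥0∞, 0 < C ∧ C ≠ ⊤ ∧
      ∀ (A0 A1 A2 : Set (Fin 3 → ℝ)),
        MeasurableSet A0 → MeasurableSet A1 → MeasurableSet A2 →
      ∀ (F0 F1 F2 : (Fin 3 → ℝ) → ℝ≥0∞),
        Measurable F0 → Measurable F1 → Measurable F2 →
        (∀ X, F0 X ≠ 0 → -X ∈ A0) → (∀ X, F1 X ≠ 0 → X ∈ A1) →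
        (∀ X, F2 X ≠ 0 → X ∈ A2) →
      trilinearForm F0 F1 F2 ≤
        C * (⨆ X0 ∈ A0, volume (A1 ∩ ((fun Y => X0 - Y) '' A2))) ^ (1/r)
          * lpNorm3 r F0 * lpNorm3 p F1 * lpNorm3 p F2 := by
  refine ⟨1, zero_lt_one, one_ne_top, ?_⟩
  intro A0 A1 A2 hA0 hA1 hA2 F0 F1 F2 hF0 hF1 hF2 hs0 hs1 hs2
  have hr0 : (0:ℝ) < r := lt_trans zero_lt_one hr
  have hrp : r.HolderConjugate p := Real.holderConjugate_iff.mpr ⟨hr, by rw [← one_div, ← one_div]; exact hp⟩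
  have hp0 : (0:ℝ) < p := hrp.symm.pos
  set M : ℝ≥0∞ := ⨆ X0 ∈ A0, volume (A1 ∩ ((fun Y => X0 - Y) '' A2)) with hM
  set S : (Fin 3 → ℝ) → Set (Fin 3 → ℝ) := fun X0 => A1 ∩ ((fun Y => X0 - Y) '' A2) with hS
  have hSeq : ∀ X0, (fun Y => X0 - Y) '' A2 = (fun Y => X0 - Y) ⁻¹' A2 := by
    intro X0; ext X
    constructor
    · rintro ⟨Y, hY, rfl⟩; simpa [_root_.sub_sub_cancel] using hY
    · intro h; exact ⟨X0 - X, h, sub_sub_cancel _ _⟩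
  have hSmeas : ∀ X0, MeasurableSet (S X0) := by
    intro X0
    rw [hS]
    simp only [hSeq]
    exact hA1.inter ((measurable_const.sub measurable_id) hA2)
  set G : (Fin 3 → ℝ) → ℝ≥0∞ := fun X0 => ∫⁻ X1, F1 X1 * F2 (X0 - X1) with hG
  have hGmeas : Measurable G :=
    Measurable.lintegral_prod_right
      ((hF1.comp measurable_snd).mul (hF2.comp (measurable_fst.sub measurable_snd)))
  set G' : (Fin 3 → ℝ) → ℝ≥0∞ := A0.indicator G with hG'
  have hG'meas : Measurable G' := hGmeas.indicator hA0
  have hmeasX0 : ∀ X0 : Fin 3 → ℝ, Measurable fun X1 => F1 X1 * F2 (X0 - X1) :=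
    fun X0 => hF1.mul (hF2.comp (measurable_const.sub measurable_id))
  -- Step 1 : rewrite the trilinear form
  have step1 : trilinearForm F0 F1 F2 = ∫⁻ X0, F0 (-X0) * G' X0 := by
    unfold trilinearForm
    refine lintegral_congr fun X0 => ?_
    simp_rw [mul_assoc]
    rw [lintegral_const_mul _ (hmeasX0 X0)]
    by_cases h : X0 ∈ A0
    · rw [hG', Set.indicator_of_mem h]
    · have h0 : F0 (-X0) = 0 := by
        by_contra hne
        exact h (by simpa using hs0 _ hne)
      simp [h0]
  -- Step 2 : Hölder in X0
  have step2 : (∫⁻ X0, F0 (-X0) * G' X0) ≤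
      (∫⁻ X0, F0 (-X0) ^ r) ^ (1/r) * (∫⁻ X0, G' X0 ^ p) ^ (1/p) := by
    have := ENNReal.lintegral_mul_le_Lp_mul_Lq volume hrp
      ((hF0.comp measurable_neg).aemeasurable) hG'meas.aemeasurable
    simpa [Pi.mul_apply] using this
  -- Step 3 : negation invariance
  have step3 : (∫⁻ X0, F0 (-X0) ^ r) = ∫⁻ X, F0 X ^ r :=
    (Measure.measurePreserving_neg volume).lintegral_comp (hF0.pow_const r)
  -- Step 4 : pointwise bound on G'
  have step4 : ∀ X0, G' X0 ≤
      M ^ (1/r) * (∫⁻ X1, F1 X1 ^ p * F2 (X0 - X1) ^ p) ^ (1/p) := by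
    intro X0
    by_cases h : X0 ∈ A0
    · rw [hG', Set.indicator_of_mem h]
      have hsupp : (fun X1 => F1 X1 * F2 (X0 - X1)) =
          (S X0).indicator (fun X1 => F1 X1 * F2 (X0 - X1)) := by
        symm
        rw [Set.indicator_eq_self]
        intro X1 hX1
        have h1 : F1 X1 ≠ 0 ∧ F2 (X0 - X1) ≠ 0 := mul_ne_zero_iff.mp hX1
        exact ⟨hs1 _ h1.1, ⟨X0 - X1, hs2 _ h1.2, sub_sub_cancel _ _⟩⟩
      calc G X0 = ∫⁻ X1 in S X0, F1 X1 * F2 (X0 - X1) := by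
            show (∫⁻ X1, F1 X1 * F2 (X0 - X1)) = _
            conv_lhs => rw [hsupp]
            exact lintegral_indicator (hSmeas X0) _
        _ ≤ (volume (S X0)) ^ (1/r) *
              (∫⁻ X1 in S X0, (F1 X1 * F2 (X0 - X1)) ^ p) ^ (1/p) := by
            have := ENNReal.lintegral_mul_le_Lp_mul_Lq (volume.restrict (S X0)) hrp
              (f := fun _ => (1:ℝ≥0∞)) (g := fun X1 => F1 X1 * F2 (X0 - X1))
              aemeasurable_const (hmeasX0 X0).aemeasurable
            simpa [Pi.mul_apply, lintegral_one, Measure.restrict_apply_univ,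
              ENNReal.one_rpow] using this
        _ ≤ M ^ (1/r) * (∫⁻ X1, F1 X1 ^ p * F2 (X0 - X1) ^ p) ^ (1/p) := by
            refine mul_le_mul' (ENNReal.rpow_le_rpow ?_ (by positivity))
              (ENNReal.rpow_le_rpow ?_ (by positivity))
            · exact le_biSup (fun X0 => volume (A1 ∩ ((fun Y => X0 - Y) '' A2))) h
            · calc (∫⁻ X1 in S X0, (F1 X1 * F2 (X0 - X1)) ^ p)
                  ≤ ∫⁻ X1, (F1 X1 * F2 (X0 - X1)) ^ p := setLIntegral_le_lintegral _ _
                _ = ∫⁻ X1, F1 X1 ^ p * F2 (X0 - X1) ^ p := by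
                    refine lintegral_congr fun X1 => ?_
                    exact ENNReal.mul_rpow_of_nonneg _ _ hp0.le
    · rw [hG', Set.indicator_of_notMem h]
      exact zero_le
  have rpow_inv_cancel : ∀ x : ℝ≥0∞, (x ^ (1/p)) ^ p = x := fun x => by
    rw [← ENNReal.rpow_mul, one_div, inv_mul_cancel₀ hp0.ne', ENNReal.rpow_one]
  have rpow_cancel_inv : ∀ x : ℝ≥0∞, (x ^ p) ^ (1/p) = x := fun x => by
    rw [← ENNReal.rpow_mul, mul_one_div, div_self hp0.ne', ENNReal.rpow_one]
  -- measurability of the inner kernel with powers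
  have hKmeas : Measurable fun X0 => ∫⁻ X1, F1 X1 ^ p * F2 (X0 - X1) ^ p :=
    Measurable.lintegral_prod_right
      (((hF1.comp measurable_snd).pow_const p).mul
        ((hF2.comp (measurable_fst.sub measurable_snd)).pow_const p))
  -- Step 5 : integrate the pointwise bound and use Fubini
  have step5 : (∫⁻ X0, G' X0 ^ p) ≤
      (M ^ (1/r)) ^ p * ((∫⁻ X, F1 X ^ p) * (∫⁻ X, F2 X ^ p)) := by
    calc (∫⁻ X0, G' X0 ^ p)
        ≤ ∫⁻ X0, (M ^ (1/r)) ^ p * (∫⁻ X1, F1 X1 ^ p * F2 (X0 - X1) ^ p) := by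
          refine lintegral_mono fun X0 => ?_
          calc G' X0 ^ p
              ≤ (M ^ (1/r) * (∫⁻ X1, F1 X1 ^ p * F2 (X0 - X1) ^ p) ^ (1/p)) ^ p :=
                ENNReal.rpow_le_rpow (step4 X0) hp0.le
            _ = (M ^ (1/r)) ^ p *
                  ((∫⁻ X1, F1 X1 ^ p * F2 (X0 - X1) ^ p) ^ (1/p)) ^ p :=
                ENNReal.mul_rpow_of_nonneg _ _ hp0.le
            _ = (M ^ (1/r)) ^ p * (∫⁻ X1, F1 X1 ^ p * F2 (X0 - X1) ^ p) := by
                rw [rpow_inv_cancel]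
      _ = (M ^ (1/r)) ^ p * ∫⁻ X0, ∫⁻ X1, F1 X1 ^ p * F2 (X0 - X1) ^ p :=
          lintegral_const_mul _ hKmeas
      _ = (M ^ (1/r)) ^ p * ((∫⁻ X, F1 X ^ p) * (∫⁻ X, F2 X ^ p)) := by
          congr 1
          rw [lintegral_lintegral_swap
            ((((hF1.comp measurable_snd).pow_const p).mul
              ((hF2.comp (measurable_fst.sub measurable_snd)).pow_const p)).aemeasurable)]
          have hinner : ∀ X1 : Fin 3 → ℝ,
              (∫⁻ X0, F1 X1 ^ p * F2 (X0 - X1) ^ p) = F1 X1 ^ p * ∫⁻ X, F2 X ^ p := by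
            intro X1
            have hm : Measurable fun X0 : Fin 3 → ℝ => F2 (X0 - X1) ^ p :=
              (hF2.comp (measurable_id.sub measurable_const)).pow_const p
            rw [lintegral_const_mul _ hm]
            congr 1
            exact (measurePreserving_sub_right volume X1).lintegral_comp (hF2.pow_const p)
          simp_rw [hinner]
          exact lintegral_mul_const _ (hF1.pow_const p)
  -- Put everything together
  have key : ((∫⁻ X0, G' X0 ^ p)) ^ (1/p) ≤ M ^ (1/r) * lpNorm3 p F1 * lpNorm3 p F2 := by
    calc ((∫⁻ X0, G' X0 ^ p)) ^ (1/p)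
        ≤ ((M ^ (1/r)) ^ p * ((∫⁻ X, F1 X ^ p) * (∫⁻ X, F2 X ^ p))) ^ (1/p) :=
          ENNReal.rpow_le_rpow step5 (by positivity)
      _ = M ^ (1/r) * lpNorm3 p F1 * lpNorm3 p F2 := by
          rw [ENNReal.mul_rpow_of_nonneg _ _ (by positivity : (0:ℝ) ≤ 1/p),
            ENNReal.mul_rpow_of_nonneg _ _ (by positivity : (0:ℝ) ≤ 1/p),
            rpow_cancel_inv]
          rw [lpNorm3, lpNorm3, mul_assoc]
  calc trilinearForm F0 F1 F2 = ∫⁻ X0, F0 (-X0) * G' X0 := step1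
    _ ≤ (∫⁻ X0, F0 (-X0) ^ r) ^ (1/r) * (∫⁻ X0, G' X0 ^ p) ^ (1/p) := step2
    _ = lpNorm3 r F0 * (∫⁻ X0, G' X0 ^ p) ^ (1/p) := by rw [step3]; rfl
    _ ≤ lpNorm3 r F0 * (M ^ (1/r) * lpNorm3 p F1 * lpNorm3 p F2) :=
        mul_le_mul_right key _
    _ = 1 * M ^ (1/r) * lpNorm3 r F0 * lpNorm3 p F1 * lpNorm3 p F2 := by ring
end

section
/- Let $1 < r \leq 2$ and $p = r'$. Let $A_0, A_1, A_2 \subset \mathbb{R}^{1+2}$ be measurable with $|A_2| < \infty$, and let $F_0, F_1, F_2 \geq 0$ be supported in $-A_0, A_1, A_2$ respectively. Then $J(F_0, F_1, F_2) = \iint F_0(-X_0) F_1(X_1) F_2(X_0 - X_1)\, dX_1\, dX_0 \lesssim \sup_{X_1 \in A_1} |A_0 \cap (X_1 + A_2)|^{1/p} \cdot |A_2|^{\frac{1}{r} - \frac{1}{p}} \cdot \|F_0\|_{L^r} \|F_1\|_{L^p} \|F_2\|_{L^p}$. -/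
open MeasureTheory ENNReal

theorem stmt3 (r p : ℝ) (hr : 1 < r) (hr2 : r ≤ 2) (hp : 1/r + 1/p = 1) :
    ∃ C : ℝ≥0∞, 0 < C ∧ C ≠ ⊤ ∧
      ∀ (A0 A1 A2 : Set (Fin 3 → ℝ)),
        MeasurableSet A0 → MeasurableSet A1 → MeasurableSet A2 →
        volume A2 < ⊤ →
      ∀ (F0 F1 F2 : (Fin 3 → ℝ) → ℝ≥0∞),
        Measurable F0 → Measurable F1 → Measurable F2 →
        (∀ X, F0 X ≠ 0 → -X ∈ A0) → (∀ X, F1 X ≠ 0 → X ∈ A1) →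
        (∀ X, F2 X ≠ 0 → X ∈ A2) →
      trilinearForm F0 F1 F2 ≤
        C * (⨆ X1 ∈ A1, volume (A0 ∩ ((fun Y => X1 + Y) '' A2))) ^ (1/p)
          * volume A2 ^ (1/r - 1/p)
          * lpNorm3 r F0 * lpNorm3 p F1 * lpNorm3 p F2 := by
  refine ⟨1, zero_lt_one, one_ne_top, ?_⟩
  intro A0 A1 A2 hA0 hA1 hA2 hA2vol F0 F1 F2 hF0 hF1 hF2 hs0 hs1 hs2
  have hr0 : (0:ℝ) < r := lt_trans zero_lt_one hr
  have hrlt : 1/r < 1 := by rw [div_lt_one hr0]; exact hr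
  have hpinvpos : (0:ℝ) < 1/p := by linarith
  have hppos : (0:ℝ) < p := by
    rcases lt_trichotomy p 0 with h|h|h
    · exfalso; have : 1/p < 0 := div_neg_of_pos_of_neg one_pos h; linarith
    · exfalso; rw [h] at hpinvpos; simp at hpinvpos
    · exact h
  have h12r : (1:ℝ)/2 ≤ 1/r := one_div_le_one_div_of_le hr0 hr2
  have hinvle : 1/p ≤ 1/r := by linarith
  have hrlep : r ≤ p := le_of_one_div_le_one_div hppos hinvle
  have hrp : Real.HolderConjugate r p := ⟨by simpa [one_div] using hp, hr0, hppos⟩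
  set μ : Measure (Fin 3 → ℝ) := volume with hμ
  set M := ⨆ X1 ∈ A1, volume (A0 ∩ ((fun Y => X1 + Y) '' A2)) with hM
  set T : Set ((Fin 3 → ℝ) × (Fin 3 → ℝ)) :=
    (Prod.fst ⁻¹' A0) ∩ ((fun z => z.1 - z.2) ⁻¹' A2) ∩ (Prod.snd ⁻¹' A1) with hT
  have hTm : MeasurableSet T :=
    ((hA0.preimage measurable_fst).inter
      (hA2.preimage (measurable_fst.sub measurable_snd))).inter
      (hA1.preimage measurable_snd)
  set g : (Fin 3 → ℝ) × (Fin 3 → ℝ) → ℝ≥0∞ := fun z => F0 (-z.1) * F2 (z.1 - z.2) with hg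
  set h : (Fin 3 → ℝ) × (Fin 3 → ℝ) → ℝ≥0∞ := fun z => T.indicator (fun z => F1 z.2) z with hh
  have hgm : Measurable g := (hF0.comp measurable_fst.neg).mul
    (hF2.comp (measurable_fst.sub measurable_snd))
  have hhm : Measurable h := (hF1.comp measurable_snd).indicator hTm
  have hfm : Measurable (fun z : (Fin 3 → ℝ) × (Fin 3 → ℝ) =>
      F0 (-z.1) * F1 z.2 * F2 (z.1 - z.2)) :=
    ((hF0.comp measurable_fst.neg).mul (hF1.comp measurable_snd)).mul
      (hF2.comp (measurable_fst.sub measurable_snd))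
  have key : trilinearForm F0 F1 F2 = ∫⁻ z, F0 (-z.1) * F1 z.2 * F2 (z.1 - z.2) ∂(μ.prod μ) :=
    (lintegral_prod _ hfm.aemeasurable).symm
  have hle : ∀ z : (Fin 3 → ℝ) × (Fin 3 → ℝ),
      F0 (-z.1) * F1 z.2 * F2 (z.1 - z.2) ≤ (g * h) z := by
    intro z
    by_cases hz : z ∈ T
    · have : h z = F1 z.2 := Set.indicator_of_mem hz _
      simp only [Pi.mul_apply, hg, this]
      exact le_of_eq (by ring)
    · rcases eq_or_ne (F0 (-z.1)) 0 with h0 | h0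
      · simp [h0]
      rcases eq_or_ne (F1 z.2) 0 with h1 | h1
      · simp [h1]
      rcases eq_or_ne (F2 (z.1 - z.2)) 0 with h2c | h2c
      · simp [h2c]
      exact absurd ⟨⟨by simpa using hs0 _ h0, hs2 _ h2c⟩, hs1 _ h1⟩ hz
  -- First Hölder factor
  have factor1 : ∫⁻ z, g z ^ r ∂(μ.prod μ) = (∫⁻ x, F0 x ^ r ∂μ) * (∫⁻ x, F2 x ^ r ∂μ) := by
    have hgr : Measurable fun z : (Fin 3 → ℝ) × (Fin 3 → ℝ) => g z ^ r := hgm.pow_const r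
    rw [lintegral_prod _ hgr.aemeasurable]
    have inner : ∀ x : Fin 3 → ℝ, (∫⁻ y, g (x, y) ^ r ∂μ) = F0 (-x) ^ r * ∫⁻ w, F2 w ^ r ∂μ := by
      intro x
      have : ∀ y, g (x, y) ^ r = F0 (-x) ^ r * F2 (x - y) ^ r := by
        intro y
        simp only [hg]
        exact ENNReal.mul_rpow_of_nonneg _ _ (le_of_lt hr0)
      simp_rw [this]
      rw [lintegral_const_mul _ (show Measurable fun y : Fin 3 → ℝ => F2 (x - y) ^ r by fun_prop)]
      congr 1
      exact (Measure.measurePreserving_sub_left μ x).lintegral_comp (hF2.pow_const r)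
    simp_rw [inner]
    rw [lintegral_mul_const _ (show Measurable fun x : Fin 3 → ℝ => F0 (-x) ^ r by fun_prop)]
    congr 1
    exact (Measure.measurePreserving_neg μ).lintegral_comp (hF0.pow_const r)
  -- Second Hölder factor
  have factor2 : ∫⁻ z, h z ^ p ∂(μ.prod μ) ≤ M * ∫⁻ x, F1 x ^ p ∂μ := by
    have hhp : ∀ z, h z ^ p = T.indicator (fun z => F1 z.2 ^ p) z := by
      intro z
      by_cases hz : z ∈ T
      · rw [hh]; simp only [Set.indicator_of_mem hz]
      · rw [hh]; simp only [Set.indicator_of_notMem hz]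
        exact ENNReal.zero_rpow_of_pos hppos
    simp_rw [hhp]
    have hmeas : Measurable fun z : (Fin 3 → ℝ) × (Fin 3 → ℝ) =>
        T.indicator (fun z => F1 z.2 ^ p) z := ((hF1.comp measurable_snd).pow_const p).indicator hTm
    rw [lintegral_prod_symm _ hmeas.aemeasurable]
    have inner_le : ∀ y : Fin 3 → ℝ,
        (∫⁻ x, T.indicator (fun z => F1 z.2 ^ p) (x, y) ∂μ) ≤ F1 y ^ p * M := by
      intro y
      by_cases hy : y ∈ A1
      · have hset : (fun x => T.indicator (fun z => F1 z.2 ^ p) (x, y))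
            = (A0 ∩ (fun x => x - y) ⁻¹' A2).indicator (fun _ => F1 y ^ p) := by
          ext x
          by_cases hx : x ∈ A0 ∩ (fun x => x - y) ⁻¹' A2
          · rw [Set.indicator_of_mem hx]
            exact Set.indicator_of_mem (show (x, y) ∈ T from ⟨⟨hx.1, hx.2⟩, hy⟩) _
          · rw [Set.indicator_of_notMem hx]
            have : (x, y) ∉ T := by
              intro hmem
              exact hx ⟨hmem.1.1, hmem.1.2⟩
            exact Set.indicator_of_notMem this _
        rw [hset, lintegral_indicator_const (hA0.inter (hA2.preimage (measurable_sub_const y))) _]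
        have hsetmeq : A0 ∩ (fun x => x - y) ⁻¹' A2 = A0 ∩ ((fun Y => y + Y) '' A2) := by
          congr 1
          ext x
          simp only [Set.mem_preimage, Set.mem_image]
          constructor
          · intro hx; exact ⟨x - y, hx, by abel⟩
          · rintro ⟨a, ha, rfl⟩; simpa using ha
        rw [hsetmeq]
        exact mul_le_mul_right (le_iSup₂ (f := fun X1 (_ : X1 ∈ A1) =>
          volume (A0 ∩ ((fun Y => X1 + Y) '' A2))) y hy) _
      · have : ∀ x, T.indicator (fun z : (Fin 3 → ℝ) × (Fin 3 → ℝ) => F1 z.2 ^ p) (x, y) = 0 := by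
          intro x
          apply Set.indicator_of_notMem
          intro hmem
          exact hy hmem.2
        simp_rw [this]
        simp
    calc (∫⁻ y, ∫⁻ x, T.indicator (fun z => F1 z.2 ^ p) (x, y) ∂μ ∂μ)
        ≤ ∫⁻ y, F1 y ^ p * M ∂μ := lintegral_mono inner_le
      _ = (∫⁻ y, F1 y ^ p ∂μ) * M := lintegral_mul_const _ (hF1.pow_const p)
      _ = M * ∫⁻ x, F1 x ^ p ∂μ := mul_comm _ _
  -- L^r norm of F2 controlled by L^p norm and measure of A2
  have hrne : r ≠ 0 := ne_of_gt hr0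
  have hpne : p ≠ 0 := ne_of_gt hppos
  have hF2norm : (∫⁻ x, F2 x ^ r ∂μ) ^ (1/r)
      ≤ μ A2 ^ (1/r - 1/p) * (∫⁻ x, F2 x ^ p ∂μ) ^ (1/p) := by
    rcases eq_or_lt_of_le hrlep with heq | hlt
    · subst heq
      rw [sub_self, ENNReal.rpow_zero, one_mul]
    · have hstep : (∫⁻ x, F2 x ^ r ∂μ)
          ≤ (∫⁻ x, F2 x ^ p ∂μ) ^ (r/p) * μ A2 ^ (1 - r/p) := by
        have hconj : Real.HolderConjugate (p/r) ((1 - r/p)⁻¹) := by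
          refine ⟨?_, lt_trans one_pos ((one_lt_div hr0).mpr hlt), ?_⟩
          · rw [inv_inv, inv_div]; ring
          · rw [inv_pos]; have : r/p < 1 := (div_lt_one hppos).mpr hlt; linarith
        have hpt : (fun x => F2 x ^ r)
            = fun x => (((fun x => F2 x ^ r) * A2.indicator 1 : (Fin 3 → ℝ) → ℝ≥0∞)) x := by
          funext x
          by_cases hx : x ∈ A2
          · simp [Set.indicator_of_mem hx]
          · have : F2 x = 0 := by
              by_contra hne; exact hx (hs2 x hne)
            simp [this, ENNReal.zero_rpow_of_pos hr0]
        have hhold := ENNReal.lintegral_mul_le_Lp_mul_Lq μ hconj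
          ((hF2.pow_const r).aemeasurable)
          ((measurable_one.indicator hA2).aemeasurable)
        rw [← hpt] at hhold
        have e1 : ∀ x : Fin 3 → ℝ, (F2 x ^ r) ^ (p/r) = F2 x ^ p := by
          intro x
          rw [← ENNReal.rpow_mul]
          congr 1
          field_simp
        have e2 : ∀ x : Fin 3 → ℝ,
            (A2.indicator (1 : (Fin 3 → ℝ) → ℝ≥0∞) x) ^ ((1 - r/p)⁻¹) = A2.indicator 1 x := by
          intro x
          by_cases hx : x ∈ A2
          · simp [Set.indicator_of_mem hx]
          · simp only [Set.indicator_of_notMem hx]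
            apply ENNReal.zero_rpow_of_pos
            rw [inv_pos]
            have : r/p < 1 := (div_lt_one hppos).mpr hlt
            linarith
        simp_rw [e1, e2] at hhold
        rw [lintegral_indicator_one hA2] at hhold
        have e3 : 1/(p/r) = r/p := one_div_div p r
        have e4 : 1/((1 - r/p)⁻¹) = 1 - r/p := by rw [one_div, inv_inv]
        rw [e3, e4] at hhold
        exact hhold
      calc (∫⁻ x, F2 x ^ r ∂μ) ^ (1/r)
          ≤ ((∫⁻ x, F2 x ^ p ∂μ) ^ (r/p) * μ A2 ^ (1 - r/p)) ^ (1/r) :=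
            ENNReal.rpow_le_rpow hstep (by positivity)
        _ = (∫⁻ x, F2 x ^ p ∂μ) ^ ((r/p) * (1/r)) * μ A2 ^ ((1 - r/p) * (1/r)) := by
            rw [ENNReal.mul_rpow_of_nonneg _ _ (by positivity : (0:ℝ) ≤ 1/r),
              ← ENNReal.rpow_mul, ← ENNReal.rpow_mul]
        _ = μ A2 ^ (1/r - 1/p) * (∫⁻ x, F2 x ^ p ∂μ) ^ (1/p) := by
            rw [mul_comm]
            congr 1
            · congr 1
              field_simp
            · congr 1
              field_simp
  -- Assembly
  calc trilinearForm F0 F1 F2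
      = ∫⁻ z, F0 (-z.1) * F1 z.2 * F2 (z.1 - z.2) ∂(μ.prod μ) := key
    _ ≤ ∫⁻ z, (g * h) z ∂(μ.prod μ) := lintegral_mono hle
    _ ≤ (∫⁻ z, g z ^ r ∂(μ.prod μ)) ^ (1/r) * (∫⁻ z, h z ^ p ∂(μ.prod μ)) ^ (1/p) :=
        ENNReal.lintegral_mul_le_Lp_mul_Lq _ hrp hgm.aemeasurable hhm.aemeasurable
    _ ≤ ((∫⁻ x, F0 x ^ r ∂μ) * (∫⁻ x, F2 x ^ r ∂μ)) ^ (1/r)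
          * (M * ∫⁻ x, F1 x ^ p ∂μ) ^ (1/p) := by
        rw [factor1]
        exact mul_le_mul_right (ENNReal.rpow_le_rpow factor2 (le_of_lt hpinvpos)) _
    _ = (∫⁻ x, F0 x ^ r ∂μ) ^ (1/r) * (∫⁻ x, F2 x ^ r ∂μ) ^ (1/r)
          * (M ^ (1/p) * (∫⁻ x, F1 x ^ p ∂μ) ^ (1/p)) := by
        rw [ENNReal.mul_rpow_of_nonneg _ _ (by positivity : (0:ℝ) ≤ 1/r),
          ENNReal.mul_rpow_of_nonneg _ _ (le_of_lt hpinvpos)]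
    _ ≤ (∫⁻ x, F0 x ^ r ∂μ) ^ (1/r)
          * (μ A2 ^ (1/r - 1/p) * (∫⁻ x, F2 x ^ p ∂μ) ^ (1/p))
          * (M ^ (1/p) * (∫⁻ x, F1 x ^ p ∂μ) ^ (1/p)) := by
        rw [mul_assoc, mul_assoc]
        exact mul_le_mul_right (mul_le_mul' hF2norm le_rfl) _
    _ = 1 * M ^ (1/p) * μ A2 ^ (1/r - 1/p) * lpNorm3 r F0 * lpNorm3 p F1 * lpNorm3 p F2 := by
        simp only [lpNorm3, hμ, one_mul]
        ring
end
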